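/- Let (Ω, 𝒜, P) be a probability space, 𝒢 ⊆ 𝒜 a sub-σ-algebra, h > 0, λ > 0, k ∈ ℝ, L_f ≥ 0, L_v ≥ 0, ε ≥ 0. Let Y' : Ω → ℝ be square-integrable, let ΔW : Ω → ℝ^d have square-integrable components with E[ΔWⁱ | 𝒢] = 0 and E[ΔWⁱ·ΔWʲ | 𝒢] = h if i = j and 0 otherwise, almost surely (1 ≤ i, j ≤ d). Let φ, ψ : Ω → ℝ be 𝒢-measurable and square-integrable, define Y := E[Y' | 𝒢] + h·(φ + ψ) and Zⁱ := h⁻¹·E[Y'·ΔWⁱ | 𝒢] for 1 ≤ i ≤ d, and assume E[φ·Y] ≤ k·E[Y²] and E[ψ²] ≤ L_v·ε + L_f·E[|Z|²], where |Z|² = Σ_{i=1}^d (Zⁱ)². Then E[(Y')²] ≥ (1 − h·(2k + λ))·E[Y²] + h·(1 − λ⁻¹·L_f)·E[|Z|²] − h·λ⁻¹·L_v·ε. -/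

import Mathlib

open MeasureTheory Finset Filter

noncomputable section

section AuxLemmas

variable {Ω : Type*} {m0 : MeasurableSpace Ω} {P : Measure Ω}

lemma aux_int_mul {f g : Ω → ℝ} (hf : MemLp f 2 P) (hg : MemLp g 2 P) :
    Integrable (fun ω => f ω * g ω) P := by
  have hm : AEStronglyMeasurable (fun ω => f ω * g ω) P := hf.1.mul hg.1
  have hb : Integrable (fun ω => (f ω ^ 2 + g ω ^ 2) / 2) P :=
    (hf.integrable_sq.add hg.integrable_sq).div_const 2
  refine hb.mono' hm ?_
  filter_upwards with ω
  rw [Real.norm_eq_abs, abs_mul]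
  nlinarith [sq_nonneg (|f ω| - |g ω|), sq_abs (f ω), sq_abs (g ω)]

lemma aux_memℒp_condexp' {Ω : Type*} {𝒢 m0 : MeasurableSpace Ω} {P : Measure Ω}
    [IsProbabilityMeasure P] (h𝒢 : 𝒢 ≤ m0)
    {f : Ω → ℝ} (hf : MemLp f 2 P) : MemLp (P[f|𝒢]) 2 P := by
  haveI : SigmaFinite (P.trim h𝒢) := inferInstance
  set fL : Lp ℝ 2 P := hf.toLp f with hfL
  have hg : (condExpL2 ℝ ℝ h𝒢 fL : Ω → ℝ) =ᵐ[P] P[f|𝒢] := by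
    refine ae_eq_condExp_of_forall_setIntegral_eq h𝒢 (hf.integrable one_le_two) ?_ ?_ ?_
    · intro s _ _
      exact ((Lp.memLp ((condExpL2 ℝ ℝ h𝒢 fL : lpMeas ℝ ℝ 𝒢 2 P) : Lp ℝ 2 P)).integrable
        one_le_two).integrableOn
    · intro s hs hμs
      rw [integral_condExpL2_eq (𝕜 := ℝ) h𝒢 fL hs hμs.ne]
      exact setIntegral_congr_ae (h𝒢 s hs) ((hf.coeFn_toLp).mono fun x hx _ => hx)
    · exact lpMeas.aestronglyMeasurable _
  exact (Lp.memLp ((condExpL2 ℝ ℝ h𝒢 fL : lpMeas ℝ ℝ 𝒢 2 P) : Lp ℝ 2 P)).ae_eq hg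

lemma aux_pull [IsProbabilityMeasure P] {𝒢 : MeasurableSpace Ω} (h𝒢 : 𝒢 ≤ m0)
    {g f : Ω → ℝ} (hg : StronglyMeasurable[𝒢] g) (hf : Integrable f P)
    (hgf : Integrable (fun ω => g ω * f ω) P) :
    ∫ ω, g ω * f ω ∂P = ∫ ω, g ω * (P[f|𝒢]) ω ∂P := by
  haveI : SigmaFinite (P.trim h𝒢) := inferInstance
  have h2 : P[g * f|𝒢] =ᵐ[P] g * P[f|𝒢] :=
    condExp_mul_of_stronglyMeasurable_left hg hgf hf
  calc ∫ ω, g ω * f ω ∂P = ∫ ω, (P[g * f|𝒢]) ω ∂P := (integral_condExp h𝒢).symm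
    _ = ∫ ω, g ω * (P[f|𝒢]) ω ∂P := integral_congr_ae (h2.mono fun ω hω => by
        simpa using hω)

/-- truncation at level `N` -/
def trc (N : ℕ) (x : ℝ) : ℝ := max (min x N) (-(N : ℝ))

lemma trc_abs (N : ℕ) (x : ℝ) : |trc N x| = min |x| N := by
  rcases le_total 0 x with hx | hx
  · have h1 : trc N x = min x N := by
      refine max_eq_left (le_min (by linarith [Nat.cast_nonneg (α := ℝ) N]) ?_)
      simpa using (Nat.cast_nonneg (α := ℝ) N)
    rw [h1, abs_of_nonneg (le_min hx (Nat.cast_nonneg N)), abs_of_nonneg hx]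
  · have h1 : trc N x = max x (-(N : ℝ)) := by
      rw [trc, min_eq_left (le_trans hx (Nat.cast_nonneg N))]
    have h2 : trc N x ≤ 0 := by
      rw [h1]; exact max_le hx (by simpa using (Nat.cast_nonneg (α := ℝ) N))
    rw [abs_of_nonpos h2, h1, abs_of_nonpos hx, ← min_neg_neg, neg_neg]

lemma trc_abs_le (N : ℕ) (x : ℝ) : |trc N x| ≤ N := by
  rw [trc_abs]; exact min_le_right _ _

lemma trc_sq_le_mul (N : ℕ) (x : ℝ) : trc N x ^ 2 ≤ trc N x * x := by
  rcases le_total 0 x with hx | hx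
  · have h1 : trc N x = min x N := by
      refine max_eq_left (le_min (by linarith [Nat.cast_nonneg (α := ℝ) N]) ?_)
      simpa using (Nat.cast_nonneg (α := ℝ) N)
    have h2 : 0 ≤ trc N x := h1 ▸ le_min hx (Nat.cast_nonneg N)
    have h3 : trc N x ≤ x := h1 ▸ min_le_left _ _
    nlinarith
  · have h1 : trc N x = max x (-(N : ℝ)) := by
      rw [trc, min_eq_left (le_trans hx (Nat.cast_nonneg N))]
    have h2 : trc N x ≤ 0 := by
      rw [h1]; exact max_le hx (by simpa using (Nat.cast_nonneg (α := ℝ) N))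
    have h3 : x ≤ trc N x := h1 ▸ le_max_left _ _
    nlinarith

lemma trc_sq_mono (x : ℝ) : Monotone fun N : ℕ => trc N x ^ 2 := by
  intro a b hab
  simp only
  rw [← sq_abs (trc a x), ← sq_abs (trc b x), trc_abs, trc_abs]
  have : min |x| (a : ℝ) ≤ min |x| (b : ℝ) :=
    min_le_min le_rfl (by exact_mod_cast hab)
  exact pow_le_pow_left₀ (le_min (abs_nonneg x) (Nat.cast_nonneg a)) this 2

lemma trc_eventually_eq (x : ℝ) : ∀ N : ℕ, |x| ≤ N → trc N x = x := by
  intro N hN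
  have h1 : x ≤ (N : ℝ) := le_trans (le_abs_self x) hN
  have h2 : -(N : ℝ) ≤ x := by
    have := neg_abs_le x; linarith
  rw [trc, min_eq_left h1, max_eq_left h2]

lemma trc_sq_tendsto (x : ℝ) :
    Filter.Tendsto (fun N : ℕ => trc N x ^ 2) Filter.atTop (nhds (x ^ 2)) := by
  have h : (fun N : ℕ => trc N x ^ 2) =ᶠ[Filter.atTop] fun _ => x ^ 2 := by
    filter_upwards [Filter.eventually_ge_atTop ⌈|x|⌉₊] with N hN
    rw [trc_eventually_eq x N (le_trans (Nat.le_ceil _) (by exact_mod_cast hN))]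
  exact Filter.Tendsto.congr' h.symm tendsto_const_nhds

lemma trc_stronglyMeasurable {m : MeasurableSpace Ω} {f : Ω → ℝ}
    (hf : StronglyMeasurable[m] f) (N : ℕ) :
    StronglyMeasurable[m] fun ω => trc N (f ω) :=
  (((hf.measurable.min measurable_const).max measurable_const)).stronglyMeasurable

end AuxLemmas

/-- One-step stability estimate behind the a posteriori error analysis of
the deep BSDE scheme: with `Y = E[Y'|𝒢] + h·(φ + ψ)` and `Zⁱ = h⁻¹·E[Y'·ΔWⁱ|𝒢]`, under the
one-sided condition `E[φ·Y] ≤ k·E[Y²]` and the bound `E[ψ²] ≤ L_v·ε + L_f·E[|Z|²]`, we have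
`E[(Y')²] ≥ (1 − h(2k + λ))·E[Y²] + h·(1 − λ⁻¹L_f)·E[|Z|²] − h·λ⁻¹·L_v·ε`. -/
theorem one_step_stability_estimate
    {Ω : Type*} {m0 : MeasurableSpace Ω} (P : Measure Ω) [IsProbabilityMeasure P]
    (𝒢 : MeasurableSpace Ω) (h𝒢 : 𝒢 ≤ m0)
    (h lam : ℝ) (hh : 0 < h) (hlam : 0 < lam)
    (k L_f L_v ε : ℝ) (hLf : 0 ≤ L_f) (hLv : 0 ≤ L_v) (hε : 0 ≤ ε)
    (d : ℕ) (hd : 1 ≤ d)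
    (Y' : Ω → ℝ) (hY' : MemLp Y' 2 P)
    (ΔW : Ω → Fin d → ℝ)
    (hΔW2 : ∀ i, MemLp (fun ω => ΔW ω i) 2 P)
    (hmean : ∀ i, P[(fun ω => ΔW ω i) | 𝒢] =ᵐ[P] 0)
    (hcov : ∀ i j, P[(fun ω => ΔW ω i * ΔW ω j) | 𝒢]
        =ᵐ[P] fun _ => if i = j then h else 0)
    (φ ψ : Ω → ℝ)
    (hφm : StronglyMeasurable[𝒢] φ) (hψm : StronglyMeasurable[𝒢] ψ)
    (hφ2 : MemLp φ 2 P) (hψ2 : MemLp ψ 2 P)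
    (Y : Ω → ℝ) (hY : Y = fun ω => (P[Y' | 𝒢]) ω + h * (φ ω + ψ ω))
    (Z : Ω → Fin d → ℝ)
    (hZ : ∀ i, (fun ω => Z ω i)
        = fun ω => h⁻¹ * (P[(fun ω' => Y' ω' * ΔW ω' i) | 𝒢]) ω)
    (hmono : (∫ ω, φ ω * Y ω ∂P) ≤ k * ∫ ω, (Y ω) ^ 2 ∂P)
    (hpsi : (∫ ω, (ψ ω) ^ 2 ∂P) ≤ L_v * ε + L_f * ∫ ω, (∑ i, (Z ω i) ^ 2) ∂P) :
    (1 - h * (2 * k + lam)) * (∫ ω, (Y ω) ^ 2 ∂P)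
      + h * (1 - lam⁻¹ * L_f) * (∫ ω, (∑ i, (Z ω i) ^ 2) ∂P)
      - h * lam⁻¹ * L_v * ε
    ≤ ∫ ω, (Y' ω) ^ 2 ∂P := by
  haveI : SigmaFinite (P.trim h𝒢) := inferInstance
  set U : Ω → ℝ := P[Y'|𝒢] with hU
  have hU2 : MemLp U 2 P := aux_memℒp_condexp' h𝒢 hY'
  have hUm : StronglyMeasurable[𝒢] U := stronglyMeasurable_condExp
  set V : Ω → ℝ := fun ω => Y' ω - U ω with hV
  have hV2 : MemLp V 2 P := hY'.sub hU2
  -- Step 1 : E[Y'²] = E[U²] + E[V²]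
  have hUY' : ∫ ω, U ω * Y' ω ∂P = ∫ ω, U ω * U ω ∂P := by
    have := aux_pull h𝒢 hUm (hY'.integrable one_le_two) (aux_int_mul hU2 hY')
    rw [← hU] at this
    exact this
  have key1 : ∫ ω, (Y' ω) ^ 2 ∂P = ∫ ω, (U ω) ^ 2 ∂P + ∫ ω, (V ω) ^ 2 ∂P := by
    have hpt : (fun ω => (V ω) ^ 2)
        = fun ω => ((Y' ω) ^ 2 - 2 * (U ω * Y' ω)) + (U ω) ^ 2 := by
      funext ω; simp only [hV]; ring
    have h1 : ∫ ω, (V ω) ^ 2 ∂P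
        = (∫ ω, (Y' ω) ^ 2 ∂P - 2 * ∫ ω, U ω * Y' ω ∂P) + ∫ ω, (U ω) ^ 2 ∂P := by
      have hI2 : Integrable (fun ω => 2 * (U ω * Y' ω)) P := (aux_int_mul hU2 hY').const_mul 2
      have hI1 : Integrable (fun ω => (Y' ω) ^ 2 - 2 * (U ω * Y' ω)) P :=
        hY'.integrable_sq.sub hI2
      rw [hpt, integral_add hI1 hU2.integrable_sq, integral_sub hY'.integrable_sq hI2,
        integral_const_mul]
    have h2 : ∫ ω, U ω * U ω ∂P = ∫ ω, (U ω) ^ 2 ∂P := by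
      simp_rw [← sq]
    linarith
  -- basic Z facts
  have hZm : ∀ i, StronglyMeasurable[𝒢] fun ω => Z ω i := fun i => by
    rw [hZ i]; exact stronglyMeasurable_condExp.const_mul _
  have hZint : ∀ i, Integrable (fun ω => Z ω i) P := fun i => by
    rw [hZ i]; exact integrable_condExp.const_mul _
  have hcondY'W : ∀ i, P[(fun ω => Y' ω * ΔW ω i)|𝒢] = fun ω => h * Z ω i := fun i => by
    funext ω
    have h1 := congrFun (hZ i) ω
    rw [h1]
    field_simp
  have hUWi : ∀ i, Integrable (fun ω => U ω * ΔW ω i) P := fun i => aux_int_mul hU2 (hΔW2 i)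
  have hVrep : ∀ i, P[(fun ω => V ω * ΔW ω i)|𝒢] =ᵐ[P] fun ω => h * Z ω i := fun i => by
    have hsplit : (fun ω => V ω * ΔW ω i)
        = (fun ω => Y' ω * ΔW ω i) - fun ω => U ω * ΔW ω i := by
      funext ω; simp only [hV, Pi.sub_apply]; ring
    have h1 := condExp_sub (m := 𝒢) (aux_int_mul hY' (hΔW2 i)) (hUWi i)
    have h2 : P[(fun ω => U ω * ΔW ω i)|𝒢] =ᵐ[P] (fun _ => (0 : ℝ)) := by
      have he : (fun ω => U ω * ΔW ω i) = U * fun ω => ΔW ω i := rfl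
      rw [he]
      have h3 : P[U * (fun ω => ΔW ω i)|𝒢] =ᵐ[P] U * P[(fun ω => ΔW ω i)|𝒢] :=
        condExp_mul_of_stronglyMeasurable_left hUm (hUWi i) ((hΔW2 i).integrable one_le_two)
      filter_upwards [h3, hmean i] with ω h3ω hmω
      rw [h3ω, Pi.mul_apply, hmω]
      simp
    rw [hsplit]
    refine h1.trans ?_
    filter_upwards [h2] with ω h2ω
    rw [Pi.sub_apply, h2ω, hcondY'W i]
    simp
  -- Step 2 : h * E[|Z|²] ≤ E[V²], via truncation
  have bN : ∀ N : ℕ, ∫ ω, ∑ i, trc N (Z ω i) ^ 2 ∂P ≤ (∫ ω, (V ω) ^ 2 ∂P) / h := by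
    intro N
    set ζ : Fin d → Ω → ℝ := fun i ω => trc N (Z ω i) with hζ
    have hζm : ∀ i, StronglyMeasurable[𝒢] (ζ i) := fun i => trc_stronglyMeasurable (hZm i) N
    have hζb : ∀ i ω, |ζ i ω| ≤ N := fun i ω => trc_abs_le N (Z ω i)
    have hζmeas : ∀ i, AEStronglyMeasurable[m0] (ζ i) P := fun i =>
      ((hζm i).mono h𝒢).aestronglyMeasurable
    have hζint : ∀ i, Integrable (ζ i) P := fun i => by
      refine (integrable_const ((N : ℝ))).mono' (hζmeas i) ?_
      exact ae_of_all _ fun ω => by simpa [Real.norm_eq_abs] using hζb i ω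
    have hζζ : ∀ i j, Integrable (fun ω => ζ i ω * ζ j ω) P := fun i j =>
      Integrable.bdd_mul (hζint j) (hζmeas i)
        (ae_of_all _ fun ω => by simpa [Real.norm_eq_abs] using hζb i ω)
    have hζZ : ∀ i, Integrable (fun ω => ζ i ω * Z ω i) P := fun i =>
      Integrable.bdd_mul (hZint i) (hζmeas i)
        (ae_of_all _ fun ω => by simpa [Real.norm_eq_abs] using hζb i ω)
    have hζVW : ∀ i, Integrable (fun ω => ζ i ω * (V ω * ΔW ω i)) P := fun i =>
      Integrable.bdd_mul (aux_int_mul hV2 (hΔW2 i)) (hζmeas i)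
        (ae_of_all _ fun ω => by simpa [Real.norm_eq_abs] using hζb i ω)
    have hζζWW : ∀ i j, Integrable (fun ω => (ζ i ω * ζ j ω) * (ΔW ω i * ΔW ω j)) P := by
      intro i j
      refine Integrable.bdd_mul (c := (N : ℝ) * N) (aux_int_mul (hΔW2 i) (hΔW2 j))
        ((hζmeas i).mul (hζmeas j)) (ae_of_all _ fun ω => ?_)
      rw [Real.norm_eq_abs, abs_mul]
      exact mul_le_mul (hζb i ω) (hζb j ω) (abs_nonneg _) (Nat.cast_nonneg N)
    have eq1 : ∀ i, ∫ ω, ζ i ω * (V ω * ΔW ω i) ∂P = h * ∫ ω, ζ i ω * Z ω i ∂P := by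
      intro i
      rw [aux_pull h𝒢 (hζm i) (aux_int_mul hV2 (hΔW2 i)) (hζVW i)]
      have : ∫ ω, ζ i ω * (P[(fun ω' => V ω' * ΔW ω' i)|𝒢]) ω ∂P
          = ∫ ω, h * (ζ i ω * Z ω i) ∂P := by
        refine integral_congr_ae ?_
        filter_upwards [hVrep i] with ω hω
        rw [hω]; ring
      rw [this, integral_const_mul]
    have eq2 : ∀ i j, ∫ ω, (ζ i ω * ζ j ω) * (ΔW ω i * ΔW ω j) ∂P
        = if i = j then h * ∫ ω, ζ i ω * ζ j ω ∂P else 0 := by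
      intro i j
      have hgm : StronglyMeasurable[𝒢] fun ω => ζ i ω * ζ j ω := (hζm i).mul (hζm j)
      rw [aux_pull h𝒢 hgm (aux_int_mul (hΔW2 i) (hΔW2 j)) (hζζWW i j)]
      have : ∫ ω, (ζ i ω * ζ j ω) * (P[(fun ω' => ΔW ω' i * ΔW ω' j)|𝒢]) ω ∂P
          = ∫ ω, (if i = j then h else 0) * (ζ i ω * ζ j ω) ∂P := by
        refine integral_congr_ae ?_
        filter_upwards [hcov i j] with ω hω
        rw [hω]; ring
      rw [this, integral_const_mul]
      by_cases hij : i = j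
      · simp [hij]
      · simp [hij]
    set W : Ω → ℝ := fun ω => ∑ i, ζ i ω * ΔW ω i with hW
    have hVW : (fun ω => V ω * W ω) = fun ω => ∑ i, ζ i ω * (V ω * ΔW ω i) := by
      funext ω
      rw [hW, Finset.mul_sum]
      exact Finset.sum_congr rfl fun i _ => by ring
    have hVWint : Integrable (fun ω => V ω * W ω) P := by
      rw [hVW]; exact integrable_finset_sum _ fun i _ => hζVW i
    have hWWe : (fun ω => W ω * W ω)
        = fun ω => ∑ i, ∑ j, (ζ i ω * ζ j ω) * (ΔW ω i * ΔW ω j) := by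
      funext ω
      rw [hW, Finset.sum_mul_sum]
      exact Finset.sum_congr rfl fun i _ => Finset.sum_congr rfl fun j _ => by ring
    have hWWint : Integrable (fun ω => W ω * W ω) P := by
      rw [hWWe]
      exact integrable_finset_sum _ fun i _ => integrable_finset_sum _ fun j _ => hζζWW i j
    have hexp : (0 : ℝ) ≤ ∫ ω, (V ω - W ω) ^ 2 ∂P := integral_nonneg fun ω => sq_nonneg _
    have hexp2 : ∫ ω, (V ω - W ω) ^ 2 ∂P
        = (∫ ω, (V ω) ^ 2 ∂P - 2 * ∫ ω, V ω * W ω ∂P) + ∫ ω, W ω * W ω ∂P := by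
      have hpt : (fun ω => (V ω - W ω) ^ 2)
          = fun ω => ((V ω) ^ 2 - 2 * (V ω * W ω)) + W ω * W ω := by
        funext ω; ring
      have hI2 : Integrable (fun ω => 2 * (V ω * W ω)) P := hVWint.const_mul 2
      have hI1 : Integrable (fun ω => (V ω) ^ 2 - 2 * (V ω * W ω)) P :=
        hV2.integrable_sq.sub hI2
      rw [hpt, integral_add hI1 hWWint, integral_sub hV2.integrable_sq hI2, integral_const_mul]
    have hintVW : ∫ ω, V ω * W ω ∂P = h * ∑ i, ∫ ω, ζ i ω * Z ω i ∂P := by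
      rw [hVW, integral_finset_sum _ fun i _ => hζVW i]
      rw [Finset.mul_sum]
      exact Finset.sum_congr rfl fun i _ => eq1 i
    have hintWW : ∫ ω, W ω * W ω ∂P = h * ∑ i, ∫ ω, ζ i ω * ζ i ω ∂P := by
      rw [hWWe, integral_finset_sum _ fun i _ => integrable_finset_sum _ fun j _ => hζζWW i j]
      have : ∀ i, ∫ ω, ∑ j, (ζ i ω * ζ j ω) * (ΔW ω i * ΔW ω j) ∂P
          = h * ∫ ω, ζ i ω * ζ i ω ∂P := by
        intro i
        rw [integral_finset_sum _ fun j _ => hζζWW i j]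
        rw [Finset.sum_congr rfl fun j _ => eq2 i j]
        simp
      rw [Finset.sum_congr rfl fun i _ => this i, Finset.mul_sum]
    have hge : ∑ i, ∫ ω, ζ i ω * ζ i ω ∂P ≤ ∑ i, ∫ ω, ζ i ω * Z ω i ∂P := by
      refine Finset.sum_le_sum fun i _ => ?_
      refine integral_mono (hζζ i i) (hζZ i) fun ω => ?_
      have := trc_sq_le_mul N (Z ω i)
      simpa [hζ, sq] using this
    have hmul := mul_le_mul_of_nonneg_left hge hh.le
    have hfinal : h * ∑ i, ∫ ω, ζ i ω * ζ i ω ∂P ≤ ∫ ω, (V ω) ^ 2 ∂P := by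
      rw [hintVW, hintWW] at hexp2
      linarith
    have hsum : ∫ ω, ∑ i, trc N (Z ω i) ^ 2 ∂P = ∑ i, ∫ ω, ζ i ω * ζ i ω ∂P := by
      rw [integral_finset_sum _ fun i _ => ?_]
      · exact Finset.sum_congr rfl fun i _ => integral_congr_ae
          (ae_of_all _ fun ω => by simp [hζ, sq])
      · have : (fun ω => trc N (Z ω i) ^ 2) = fun ω => ζ i ω * ζ i ω := by
          funext ω; simp [hζ, sq]
        rw [this]; exact hζζ i i
    rw [hsum, le_div_iff₀ hh]
    linarith
  -- monotone convergence
  have hZmeas : ∀ i, Measurable[m0] fun ω => Z ω i := fun i => ((hZm i).mono h𝒢).measurable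
  have hfmeas : Measurable[m0] fun ω => ∑ i, (Z ω i) ^ 2 :=
    Finset.measurable_sum _ fun i _ => ((hZmeas i).pow_const 2)
  have hgN_meas : ∀ N : ℕ, Measurable[m0] fun ω => ∑ i, trc N (Z ω i) ^ 2 := fun N =>
    Finset.measurable_sum _ fun i _ =>
      ((((hZmeas i).min measurable_const).max measurable_const).pow_const 2)
  have hgN_int : ∀ N : ℕ, Integrable (fun ω => ∑ i, trc N (Z ω i) ^ 2) P := by
    intro N
    refine integrable_finset_sum _ fun i _ => ?_
    refine (integrable_const ((N : ℝ) ^ 2)).mono'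
      ((((((hZmeas i).min measurable_const).max measurable_const).pow_const 2)).aestronglyMeasurable)
      (ae_of_all _ fun ω => ?_)
    rw [Real.norm_eq_abs, abs_of_nonneg (sq_nonneg _), ← sq_abs]
    exact pow_le_pow_left₀ (abs_nonneg _) (trc_abs_le N (Z ω i)) 2
  have hnn : ∀ ω, 0 ≤ ∑ i, (Z ω i) ^ 2 := fun ω => Finset.sum_nonneg fun i _ => sq_nonneg _
  have hgnn : ∀ (N : ℕ) ω, 0 ≤ ∑ i, trc N (Z ω i) ^ 2 := fun N ω =>
    Finset.sum_nonneg fun i _ => sq_nonneg _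
  have hlim : ∫⁻ ω, ENNReal.ofReal (∑ i, (Z ω i) ^ 2) ∂P
      ≤ ENNReal.ofReal ((∫ ω, (V ω) ^ 2 ∂P) / h) := by
    have hpt : ∀ ω, (⨆ N : ℕ, ENNReal.ofReal (∑ i, trc N (Z ω i) ^ 2))
        = ENNReal.ofReal (∑ i, (Z ω i) ^ 2) := by
      intro ω
      have hm : Monotone fun N : ℕ => ENNReal.ofReal (∑ i, trc N (Z ω i) ^ 2) := fun a b hab =>
        ENNReal.ofReal_le_ofReal (Finset.sum_le_sum fun i _ => trc_sq_mono (Z ω i) hab)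
      have ht : Tendsto (fun N : ℕ => ENNReal.ofReal (∑ i, trc N (Z ω i) ^ 2)) atTop
          (nhds (ENNReal.ofReal (∑ i, (Z ω i) ^ 2))) :=
        (ENNReal.continuous_ofReal.tendsto _).comp
          (tendsto_finset_sum _ fun i _ => trc_sq_tendsto (Z ω i))
      exact tendsto_nhds_unique (tendsto_atTop_iSup hm) ht
    calc ∫⁻ ω, ENNReal.ofReal (∑ i, (Z ω i) ^ 2) ∂P
        = ∫⁻ ω, ⨆ N : ℕ, ENNReal.ofReal (∑ i, trc N (Z ω i) ^ 2) ∂P :=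
          lintegral_congr fun ω => (hpt ω).symm
      _ = ⨆ N : ℕ, ∫⁻ ω, ENNReal.ofReal (∑ i, trc N (Z ω i) ^ 2) ∂P :=
          lintegral_iSup' (fun N => ((hgN_meas N).ennreal_ofReal).aemeasurable)
            (ae_of_all _ fun ω a b hab =>
              ENNReal.ofReal_le_ofReal (Finset.sum_le_sum fun i _ => trc_sq_mono (Z ω i) hab))
      _ ≤ ENNReal.ofReal ((∫ ω, (V ω) ^ 2 ∂P) / h) := by
          refine iSup_le fun N => ?_
          rw [← ofReal_integral_eq_lintegral_ofReal (hgN_int N) (ae_of_all _ fun ω => hgnn N ω)]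
          exact ENNReal.ofReal_le_ofReal (bN N)
  have hSint : Integrable (fun ω => ∑ i, (Z ω i) ^ 2) P := by
    refine ⟨hfmeas.aestronglyMeasurable, ?_⟩
    rw [hasFiniteIntegral_iff_norm]
    refine lt_of_le_of_lt ?_ (ENNReal.ofReal_lt_top (r := (∫ ω, (V ω) ^ 2 ∂P) / h))
    refine le_trans (le_of_eq (lintegral_congr fun ω => ?_)) hlim
    rw [Real.norm_eq_abs, abs_of_nonneg (hnn ω)]
  have hSC : ∫ ω, (∑ i, (Z ω i) ^ 2) ∂P ≤ (∫ ω, (V ω) ^ 2 ∂P) / h := by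
    rw [integral_eq_lintegral_of_nonneg_ae (ae_of_all _ hnn) hfmeas.aestronglyMeasurable]
    exact ENNReal.toReal_le_of_le_ofReal
      (div_nonneg (integral_nonneg fun ω => sq_nonneg _) hh.le) hlim
  have hSle : h * ∫ ω, (∑ i, (Z ω i) ^ 2) ∂P ≤ ∫ ω, (V ω) ^ 2 ∂P := by
    have h1 := mul_le_mul_of_nonneg_left hSC hh.le
    have h2 : h * ((∫ ω, (V ω) ^ 2 ∂P) / h) = ∫ ω, (V ω) ^ 2 ∂P := by
      field_simp
    linarith
  -- Step 3 : lower bound for E[U²] in terms of E[Y²]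
  set χ : Ω → ℝ := fun ω => φ ω + ψ ω with hχ
  have hχ2 : MemLp χ 2 P := hφ2.add hψ2
  have hY2 : MemLp Y 2 P := by
    have he : (fun ω => U ω + h * (φ ω + ψ ω)) = U + fun ω => h * χ ω := rfl
    rw [hY, he]
    exact hU2.add (hχ2.const_mul h)
  have hB : ∫ ω, (U ω) ^ 2 ∂P
      = (∫ ω, (Y ω) ^ 2 ∂P - 2 * h * ∫ ω, χ ω * Y ω ∂P) + h ^ 2 * ∫ ω, (χ ω) ^ 2 ∂P := by
    have hpt : (fun ω => (U ω) ^ 2)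
        = fun ω => ((Y ω) ^ 2 - 2 * h * (χ ω * Y ω)) + h ^ 2 * (χ ω) ^ 2 := by
      funext ω
      have hYω := congrFun hY ω
      have hUω : U ω = Y ω - h * χ ω := by rw [hYω, hχ]; ring
      rw [hUω]; ring
    have hI2 : Integrable (fun ω => 2 * h * (χ ω * Y ω)) P :=
      (aux_int_mul hχ2 hY2).const_mul (2 * h)
    have hI3 : Integrable (fun ω => h ^ 2 * (χ ω) ^ 2) P :=
      hχ2.integrable_sq.const_mul (h ^ 2)
    have hI1 : Integrable (fun ω => (Y ω) ^ 2 - 2 * h * (χ ω * Y ω)) P :=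
      hY2.integrable_sq.sub hI2
    rw [hpt, integral_add hI1 hI3, integral_sub hY2.integrable_sq hI2,
      integral_const_mul, integral_const_mul]
  have hχY : ∫ ω, χ ω * Y ω ∂P = ∫ ω, φ ω * Y ω ∂P + ∫ ω, ψ ω * Y ω ∂P := by
    have hpt : (fun ω => χ ω * Y ω) = fun ω => φ ω * Y ω + ψ ω * Y ω := by
      funext ω; rw [hχ]; ring
    rw [hpt, integral_add (aux_int_mul hφ2 hY2) (aux_int_mul hψ2 hY2)]
  have hYoung : ∫ ω, ψ ω * Y ω ∂P
      ≤ lam / 2 * ∫ ω, (Y ω) ^ 2 ∂P + lam⁻¹ / 2 * ∫ ω, (ψ ω) ^ 2 ∂P := by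
    have hpt : ∀ ω, ψ ω * Y ω ≤ lam / 2 * (Y ω) ^ 2 + lam⁻¹ / 2 * (ψ ω) ^ 2 := by
      intro ω
      have h1 : 0 ≤ (lam * Y ω - ψ ω) ^ 2 := sq_nonneg _
      have h2 : lam * lam⁻¹ * (ψ ω) ^ 2 = (ψ ω) ^ 2 := by
        rw [mul_inv_cancel₀ hlam.ne', one_mul]
      nlinarith [h1, h2, hlam]
    calc ∫ ω, ψ ω * Y ω ∂P
        ≤ ∫ ω, (lam / 2 * (Y ω) ^ 2 + lam⁻¹ / 2 * (ψ ω) ^ 2) ∂P :=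
          integral_mono (aux_int_mul hψ2 hY2)
            ((hY2.integrable_sq.const_mul _).add (hψ2.integrable_sq.const_mul _)) hpt
      _ = lam / 2 * ∫ ω, (Y ω) ^ 2 ∂P + lam⁻¹ / 2 * ∫ ω, (ψ ω) ^ 2 ∂P := by
          have hI1 : Integrable (fun ω => lam / 2 * (Y ω) ^ 2) P :=
            hY2.integrable_sq.const_mul _
          have hI2 : Integrable (fun ω => lam⁻¹ / 2 * (ψ ω) ^ 2) P :=
            hψ2.integrable_sq.const_mul _
          rw [integral_add hI1 hI2, integral_const_mul, integral_const_mul]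
  -- final assembly
  have hX2' : 0 ≤ h ^ 2 * ∫ ω, (χ ω) ^ 2 ∂P :=
    mul_nonneg (sq_nonneg h) (integral_nonneg fun ω => sq_nonneg _)
  have c1 : 2 * h * (∫ ω, φ ω * Y ω ∂P) ≤ 2 * h * (k * ∫ ω, (Y ω) ^ 2 ∂P) :=
    mul_le_mul_of_nonneg_left hmono (by linarith)
  have c2 : 2 * h * (∫ ω, ψ ω * Y ω ∂P)
      ≤ 2 * h * (lam / 2 * ∫ ω, (Y ω) ^ 2 ∂P + lam⁻¹ / 2 * ∫ ω, (ψ ω) ^ 2 ∂P) :=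
    mul_le_mul_of_nonneg_left hYoung (by linarith)
  have c3 : (h * lam⁻¹) * (∫ ω, (ψ ω) ^ 2 ∂P)
      ≤ (h * lam⁻¹) * (L_v * ε + L_f * ∫ ω, (∑ i, (Z ω i) ^ 2) ∂P) :=
    mul_le_mul_of_nonneg_left hpsi (mul_nonneg hh.le (inv_nonneg.2 hlam.le))
  rw [hχY] at hB
  linarith [key1, hSle, hB, c1, c2, c3, hX2']

end
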